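/- Every semiring congruence on the semiring N of natural numbers is generated by a single pair (n, m); that is, for any semiring congruence ρ on N there exist natural numbers n, m such that ρ is the smallest congruence containing (n, m). -/

import Mathlib

private lemma shiftρ (ρ : RingCon ℕ) {x y : ℕ} (h : ρ x y) (t : ℕ) : ρ (x + t) (y + t) :=
  ρ.add h (ρ.refl t)

private lemma chainρ (ρ : RingCon ℕ) {x d : ℕ} (h : ρ x (x + d)) : ∀ k, ρ x (x + k * d) := by
  intro k
  induction k with
  | zero => simpa using ρ.refl x
  | succ n ih =>
    have h2 := shiftρ ρ h (n * d)
    have h3 : ρ x (x + d + n * d) := ρ.trans ih h2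
    have e : x + d + n * d = x + (n + 1) * d := by ring
    rwa [e] at h3

theorem stmt_7 (ρ : RingCon ℕ) :
    ∃ n m : ℕ, ρ = ringConGen (fun a b : ℕ => a = n ∧ b = m) := by
  by_cases htriv : ∀ a b : ℕ, ρ a b → a = b
  · refine ⟨0, 0, le_antisymm ?_ (RingCon.ringConGen_le.2 ?_)⟩
    · intro a b h
      rcases htriv a b h with rfl
      exact (ringConGen _).refl a
    · rintro x y ⟨rfl, rfl⟩
      exact ρ.refl 0
  · push_neg at htriv
    obtain ⟨a, b, hab, hne⟩ := htriv
    have hpair : ∃ x d, 0 < d ∧ ρ x (x + d) := by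
      rcases lt_or_gt_of_ne hne with h | h
      · exact ⟨a, b - a, by omega, by rwa [Nat.add_sub_cancel' h.le]⟩
      · exact ⟨b, a - b, by omega, by rw [Nat.add_sub_cancel' h.le]; exact ρ.symm hab⟩
    set S : Set ℕ := {x | ∃ d, 0 < d ∧ ρ x (x + d)} with hS
    have hSne : S.Nonempty := by obtain ⟨x, d, hd, hx⟩ := hpair; exact ⟨x, d, hd, hx⟩
    set r := sInf S with hr
    have hrS : r ∈ S := Nat.sInf_mem hSne
    obtain ⟨d₁, hd₁pos, hd₁⟩ := hrS
    set D : Set ℕ := {d | 0 < d ∧ ∃ x, ρ x (x + d)} with hD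
    have hDne : D.Nonempty := ⟨d₁, hd₁pos, r, hd₁⟩
    set m := sInf D with hm
    have hmD : m ∈ D := Nat.sInf_mem hDne
    obtain ⟨hmpos, x₀, hx₀⟩ := hmD
    have hdvd : ∀ d ∈ D, m ∣ d := by
      rintro d ⟨hdpos, x, hx⟩
      by_contra hnd
      have hmod : d % m ≠ 0 := fun h0 => hnd (Nat.dvd_of_mod_eq_zero h0)
      have hs : d % m ∈ D := by
        refine ⟨Nat.pos_of_ne_zero hmod, x + x₀ + (d / m) * m, ?_⟩
        have h1 : ρ (x + x₀) (x + x₀ + d) := by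
          have := shiftρ ρ hx x₀; rwa [show x + d + x₀ = x + x₀ + d by ring] at this
        have h2 : ρ x₀ (x₀ + (d / m) * m) := chainρ ρ hx₀ _
        have h3 : ρ (x + x₀) (x + x₀ + (d / m) * m) := by
          have := shiftρ ρ h2 x
          rwa [show x₀ + x = x + x₀ by ring,
            show x₀ + d / m * m + x = x + x₀ + d / m * m by ring] at this
        have h4 : ρ (x + x₀ + (d / m) * m) (x + x₀ + d) := ρ.trans (ρ.symm h3) h1
        have e : x + x₀ + d = x + x₀ + (d / m) * m + d % m := by
          have hq : (d / m) * m + d % m = d := by rw [mul_comm]; exact Nat.div_add_mod d m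
          omega
        rwa [e] at h4
      have hle := Nat.sInf_le hs
      have hlt : d % m < m := Nat.mod_lt _ hmpos
      omega
    have hrm : ρ r (r + m) := by
      have hN : ρ r (r + x₀ * d₁) := chainρ ρ hd₁ x₀
      have hNx : x₀ ≤ r + x₀ * d₁ := by nlinarith
      have hNm : ρ (r + x₀ * d₁) (r + x₀ * d₁ + m) := by
        have := shiftρ ρ hx₀ (r + x₀ * d₁ - x₀)
        rwa [show x₀ + (r + x₀ * d₁ - x₀) = r + x₀ * d₁ by omega,
          show x₀ + m + (r + x₀ * d₁ - x₀) = r + x₀ * d₁ + m by omega] at this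
      have hrmN : ρ (r + m) (r + x₀ * d₁ + m) := shiftρ ρ hN m
      exact ρ.trans (ρ.trans hN hNm) (ρ.symm hrmN)
    refine ⟨r, r + m, le_antisymm ?_ (RingCon.ringConGen_le.2 ?_)⟩
    · set σ := ringConGen (fun a b : ℕ => a = r ∧ b = r + m) with hσ
      have hbase : σ r (r + m) := RingConGen.Rel.of _ _ ⟨rfl, rfl⟩
      have key : ∀ x y : ℕ, r ≤ x → x ≤ y → m ∣ y - x → σ x y := by
        intro x y hrx hxy hdxy
        obtain ⟨k, hk⟩ := hdxy
        have hxm : σ x (x + m) := by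
          have := shiftρ σ hbase (x - r)
          rwa [show r + (x - r) = x by omega, show r + m + (x - r) = x + m by omega] at this
        have := chainρ σ hxm k
        rwa [show x + k * m = y by rw [mul_comm]; omega] at this
      intro x y h
      rcases lt_trichotomy x y with hlt | rfl | hlt
      · have hxS : x ∈ S := ⟨y - x, by omega, by rwa [Nat.add_sub_cancel' hlt.le]⟩
        have hrx : r ≤ x := Nat.sInf_le hxS
        have hdiff : y - x ∈ D := ⟨by omega, x, by rwa [Nat.add_sub_cancel' hlt.le]⟩
        exact key x y hrx hlt.le (hdvd _ hdiff)
      · exact σ.refl x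
      · have h' := ρ.symm h
        have hyS : y ∈ S := ⟨x - y, by omega, by rwa [Nat.add_sub_cancel' hlt.le]⟩
        have hry : r ≤ y := Nat.sInf_le hyS
        have hdiff : x - y ∈ D := ⟨by omega, y, by rwa [Nat.add_sub_cancel' hlt.le]⟩
        exact σ.symm (key y x hry hlt.le (hdvd _ hdiff))
    · rintro x y ⟨rfl, rfl⟩
      exact hrm
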